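/- arXiv:2005.09847 — 2 statements merged into one kernel-verified Lean document; each statement's English description precedes it below -/
import Mathlib

section
/- Let A be a graded-commutative ℚ-algebra and let zcl_r(A) denote the greatest n such that there exist n elements in the kernel of the multiplication map A^{⊗r} → A whose product is nonzero, and let cup(A) denote the greatest n such that there exist n elements of positive degree in A whose product is nonzero. Then zcl_{r+1}(A) ≥ zcl_r(A) + cup(A) for all r ≥ 2. -/
open scoped TensorProduct

/-- The multiplication map `μ_r : A^{⊗r} → A`, `a₁ ⊗ ⋯ ⊗ a_r ↦ a₁ ⋯ a_r`. -/
noncomputable def mulAlgHom (A : Type*) [CommRing A] [Algebra ℚ A] (r : ℕ) :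
    (⨂[ℚ] _ : Fin r, A) →ₐ[ℚ] A :=
  PiTensorProduct.liftAlgHom (MultilinearMap.mkPiAlgebra ℚ (Fin r) A)
    (by simp) (by intro x y; simp [Finset.prod_mul_distrib])


open PiTensorProduct

section Aux

variable {A : Type*} [CommRing A] [Algebra ℚ A]

lemma mulAlgHom_tprod (r : ℕ) (v : Fin r → A) :
    mulAlgHom A r (tprod ℚ v) = ∏ i, v i := by
  show PiTensorProduct.lift (MultilinearMap.mkPiAlgebra ℚ (Fin r) A) (tprod ℚ v) = _
  simp

/-- the multilinear map `v ↦ v ⊗ 1`. -/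
noncomputable def snocML (r : ℕ) :
    MultilinearMap ℚ (fun _ : Fin r => A) (⨂[ℚ] _ : Fin (r+1), A) where
  toFun v := tprod ℚ (Fin.snoc v 1)
  map_update_add' := @fun dec v i x y => by
    obtain rfl : dec = instDecidableEqFin r := Subsingleton.elim _ _
    rw [Fin.snoc_update, Fin.snoc_update, Fin.snoc_update,
      MultilinearMap.map_update_add]
  map_update_smul' := @fun dec v i q x => by
    obtain rfl : dec = instDecidableEqFin r := Subsingleton.elim _ _
    rw [Fin.snoc_update, Fin.snoc_update, MultilinearMap.map_update_smul]

lemma snoc_one_eq_one (r : ℕ) : (Fin.snoc (1 : Fin r → A) (1 : A)) = (1 : Fin (r+1) → A) := by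
  funext i
  induction i using Fin.lastCases with
  | last => simp
  | cast k => simp

/-- `x ↦ x ⊗ 1` as an algebra hom. -/
noncomputable def iotaHom (r : ℕ) :
    (⨂[ℚ] _ : Fin r, A) →ₐ[ℚ] (⨂[ℚ] _ : Fin (r+1), A) :=
  PiTensorProduct.liftAlgHom (snocML r)
    (by simp [snocML, snoc_one_eq_one, PiTensorProduct.one_def])
    (by
      intro x y
      simp only [snocML, MultilinearMap.coe_mk, tprod_mul_tprod]
      congr 1
      funext i
      induction i using Fin.lastCases with
      | last => simp
      | cast k => simp)

lemma iotaHom_tprod (r : ℕ) (v : Fin r → A) :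
    iotaHom r (PiTensorProduct.tprod ℚ v) = PiTensorProduct.tprod ℚ (Fin.snoc v 1) := by
  simp [iotaHom, snocML]

lemma mul_iotaHom (r : ℕ) (x : ⨂[ℚ] _ : Fin r, A) :
    mulAlgHom A (r+1) (iotaHom r x) = mulAlgHom A r x := by
  induction x using PiTensorProduct.induction_on with
  | smul_tprod q v =>
      simp [iotaHom_tprod, mulAlgHom_tprod, Fin.prod_snoc]
  | add x y hx hy => simp [hx, hy]

lemma mul_singleAlgHom (r : ℕ) (i : Fin r) (b : A) :
    mulAlgHom A r (PiTensorProduct.singleAlgHom (R := ℚ) i b) = b := by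
  classical
  show mulAlgHom A r (tprod ℚ _) = b
  rw [mulAlgHom_tprod]
  simp

/-- The linear map `A^{⊗(r+1)} → ℚ`, `a₀ ⊗ ⋯ ⊗ a_r ↦ f(a₀ ⊗ ⋯ ⊗ a_{r-1}) * h(a_r)`,
as a multilinear map. -/
noncomputable def lastSplitML (r : ℕ) (f : (⨂[ℚ] _ : Fin r, A) →ₗ[ℚ] ℚ) (h : A →ₗ[ℚ] ℚ) :
    MultilinearMap ℚ (fun _ : Fin (r+1) => A) ℚ where
  toFun v := f (tprod ℚ (Fin.init v)) * h (v (Fin.last r))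
  map_update_add' := @fun dec v i x y => by
    obtain rfl : dec = instDecidableEqFin (r+1) := Subsingleton.elim _ _
    induction i using Fin.lastCases with
    | last =>
        rw [Fin.init_update_last, Fin.init_update_last, Fin.init_update_last,
          Function.update_self, Function.update_self, Function.update_self,
          map_add, mul_add]
    | cast k =>
        rw [Fin.init_update_castSucc, Fin.init_update_castSucc, Fin.init_update_castSucc,
          MultilinearMap.map_update_add, map_add, add_mul,
          Function.update_of_ne (Fin.castSucc_lt_last k).ne',
          Function.update_of_ne (Fin.castSucc_lt_last k).ne',
          Function.update_of_ne (Fin.castSucc_lt_last k).ne']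
  map_update_smul' := @fun dec v i q x => by
    obtain rfl : dec = instDecidableEqFin (r+1) := Subsingleton.elim _ _
    induction i using Fin.lastCases with
    | last =>
        rw [Fin.init_update_last, Fin.init_update_last,
          Function.update_self, Function.update_self, map_smul, smul_eq_mul,
          mul_left_comm, smul_eq_mul]
    | cast k =>
        rw [Fin.init_update_castSucc, Fin.init_update_castSucc,
          MultilinearMap.map_update_smul, map_smul, smul_eq_mul, smul_eq_mul, mul_assoc,
          Function.update_of_ne (Fin.castSucc_lt_last k).ne',
          Function.update_of_ne (Fin.castSucc_lt_last k).ne']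

lemma singleAlgHom_eq_tprod {r : ℕ} [DecidableEq (Fin r)] (i : Fin r) (b : A) :
    PiTensorProduct.singleAlgHom (R := ℚ) (A := fun _ : Fin r => A) i b = PiTensorProduct.tprod ℚ (Pi.mulSingle i b) := rfl

lemma lastSplitML_apply (r : ℕ) (f : (⨂[ℚ] _ : Fin r, A) →ₗ[ℚ] ℚ) (h : A →ₗ[ℚ] ℚ)
    (v : Fin (r+1) → A) :
    lastSplitML r f h v = f (tprod ℚ (Fin.init v)) * h (v (Fin.last r)) := rfl

lemma lastSplit_key (m : ℕ) (f : (⨂[ℚ] _ : Fin (m+1), A) →ₗ[ℚ] ℚ) (h : A →ₗ[ℚ] ℚ)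
    (x : ⨂[ℚ] _ : Fin (m+1), A) (u v : A) :
    PiTensorProduct.lift (lastSplitML (m+1) f h)
      (iotaHom (m+1) x * PiTensorProduct.singleAlgHom (R := ℚ) (Fin.last (m+1)) u
        * PiTensorProduct.singleAlgHom (R := ℚ) (0 : Fin (m+1+1)) v)
      = f (x * PiTensorProduct.singleAlgHom (R := ℚ) (0 : Fin (m+1)) v) * h u := by
  classical
  induction x using PiTensorProduct.induction_on with
  | smul_tprod q w =>
      rw [map_smul, iotaHom_tprod, singleAlgHom_eq_tprod, singleAlgHom_eq_tprod,
        singleAlgHom_eq_tprod, smul_mul_assoc, smul_mul_assoc, map_smul,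
        tprod_mul_tprod, tprod_mul_tprod]
      have e1 : ((Fin.snoc w 1 : Fin (m+1+1) → A) * Pi.mulSingle (Fin.last (m+1)) u
          * Pi.mulSingle (0 : Fin (m+1+1)) v)
          = (Fin.snoc ((w : Fin (m+1) → A) * Pi.mulSingle (0 : Fin (m+1)) v) u
            : Fin (m+1+1) → A) := by
        funext i
        induction i using Fin.lastCases with
        | last =>
            have h0 : (Fin.last (m+1) : Fin (m+1+1)) ≠ 0 := by simp [Fin.ext_iff]
            simp [Pi.mulSingle_apply, h0]
        | cast k =>
            have h1 : (Fin.castSucc k = (0 : Fin (m+1+1))) ↔ k = 0 := by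
              exact Fin.castSucc_eq_zero_iff
            simp only [Pi.mul_apply, Fin.snoc_castSucc, Pi.mulSingle_apply,
              if_neg (Fin.castSucc_lt_last k).ne, mul_one, h1]
      rw [e1, PiTensorProduct.lift.tprod, lastSplitML_apply, Fin.init_snoc, Fin.snoc_last,
        smul_mul_assoc, tprod_mul_tprod, map_smul]
      simp only [smul_eq_mul]
      ring
  | add x y hx hy =>
      simp only [map_add, add_mul, hx, hy]

end Aux

/-- The inequality `zcl_{r+1}(A) ≥ zcl_r(A) + cup(A)` of Farber–Kishimoto–Stanley, stated
purely algebraically for a (graded-)commutative graded `ℚ`-algebra `A`: if there are `n`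
elements of the kernel of `μ_r : A^{⊗r} → A` with nonzero product, and `c` elements of `A` of
positive degree (i.e. with vanishing degree-zero component) with nonzero product, then there
are `n + c` elements of the kernel of `μ_{r+1} : A^{⊗(r+1)} → A` with nonzero product. -/
theorem stmt_10 (A : Type*) [CommRing A] [Algebra ℚ A]
    (𝒜 : ℕ → Submodule ℚ A) [GradedAlgebra 𝒜] (r : ℕ) (hr : 2 ≤ r) (n c : ℕ)
    (hz : ∃ x : Fin n → ⨂[ℚ] _ : Fin r, A,
      (∀ i, mulAlgHom A r (x i) = 0) ∧ (∏ i, x i) ≠ 0)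
    (hc : ∃ a : Fin c → A,
      (∀ i, GradedAlgebra.proj 𝒜 0 (a i) = 0) ∧ (∏ i, a i) ≠ 0) :
    ∃ y : Fin (n + c) → ⨂[ℚ] _ : Fin (r + 1), A,
      (∀ i, mulAlgHom A (r + 1) (y i) = 0) ∧ (∏ i, y i) ≠ 0 := by
  classical
  obtain ⟨x, hx0, hxne⟩ := hz
  obtain ⟨a, ha0, hane⟩ := hc
  obtain ⟨m, rfl⟩ : ∃ m, r = m + 1 := ⟨r - 1, by omega⟩
  -- reduce to homogeneous positive-degree elements
  have hexists : ∃ d : Fin c → ℕ, (∏ i, (DirectSum.decompose 𝒜 (a i) (d i) : A)) ≠ 0 := by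
    by_contra hcon
    push_neg at hcon
    apply hane
    calc ∏ i, a i
        = ∏ i, ∑ j ∈ (DirectSum.decompose 𝒜 (a i)).support,
            (DirectSum.decompose 𝒜 (a i) j : A) :=
          Finset.prod_congr rfl fun i _ => (DirectSum.sum_support_decompose 𝒜 (a i)).symm
      _ = ∑ p ∈ Fintype.piFinset fun i => (DirectSum.decompose 𝒜 (a i)).support,
            ∏ i, (DirectSum.decompose 𝒜 (a i) (p i) : A) := Finset.prod_univ_sum _ _
      _ = 0 := Finset.sum_eq_zero fun p _ => hcon p
  obtain ⟨d, hd⟩ := hexists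
  set b : Fin c → A := fun i => (DirectSum.decompose 𝒜 (a i) (d i) : A) with hb
  have hbmem : ∀ i, b i ∈ 𝒜 (d i) := fun i => SetLike.coe_mem _
  have hdpos : ∀ i, d i ≠ 0 := by
    intro i h0
    apply hd
    apply Finset.prod_eq_zero (Finset.mem_univ i)
    show (DirectSum.decompose 𝒜 (a i) (d i) : A) = 0
    rw [h0]
    simpa [GradedAlgebra.proj_apply] using ha0 i
  set D := ∑ i, d i with hD
  have hbprod : (∏ i, b i) ∈ 𝒜 D :=
    SetLike.prod_mem_graded 𝒜 d b fun i _ => hbmem i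
  obtain ⟨f, hf⟩ : ∃ f : Module.Dual ℚ (⨂[ℚ] _ : Fin (m+1), A), f (∏ i, x i) ≠ 0 := by
    by_contra hcon; push_neg at hcon
    exact hxne ((Module.forall_dual_apply_eq_zero_iff ℚ _).mp hcon)
  obtain ⟨g, hg⟩ : ∃ g : Module.Dual ℚ A, g (∏ i, b i) ≠ 0 := by
    by_contra hcon; push_neg at hcon
    exact hd ((Module.forall_dual_apply_eq_zero_iff ℚ _).mp hcon)
  set h : A →ₗ[ℚ] ℚ := g ∘ₗ GradedAlgebra.proj 𝒜 D with hh
  refine ⟨Fin.addCases (fun i => iotaHom (m+1) (x i))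
    (fun j => PiTensorProduct.singleAlgHom (R := ℚ) (Fin.last (m+1)) (b j)
      - PiTensorProduct.singleAlgHom (R := ℚ) (0 : Fin (m+1+1)) (b j)), ?_, ?_⟩
  · intro i
    induction i using Fin.addCases with
    | left i =>
        simp only [Fin.addCases_left]
        rw [mul_iotaHom, hx0 i]
    | right j =>
        simp only [Fin.addCases_right]
        rw [map_sub, mul_singleAlgHom, mul_singleAlgHom, sub_self]
  · rw [Fin.prod_univ_add]
    simp only [Fin.addCases_left, Fin.addCases_right]
    have hFP : PiTensorProduct.lift (lastSplitML (m+1) f h)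
        ((∏ i, iotaHom (m+1) (x i)) *
          ∏ j, (PiTensorProduct.singleAlgHom (R := ℚ) (A := fun _ : Fin (m+1+1) => A) (Fin.last (m+1)) (b j)
            - PiTensorProduct.singleAlgHom (R := ℚ) (A := fun _ : Fin (m+1+1) => A) (0 : Fin (m+1+1)) (b j)))
        = f (∏ i, x i) * g (∏ j, b j) := by
      rw [← map_prod]
      have e2 : (∏ j, (PiTensorProduct.singleAlgHom (R := ℚ) (A := fun _ : Fin (m+1+1) => A) (Fin.last (m+1)) (b j)
            - PiTensorProduct.singleAlgHom (R := ℚ) (A := fun _ : Fin (m+1+1) => A) (0 : Fin (m+1+1)) (b j)))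
          = ∑ t ∈ Finset.univ.powerset,
              PiTensorProduct.singleAlgHom (R := ℚ) (A := fun _ : Fin (m+1+1) => A) (Fin.last (m+1)) (∏ j ∈ t, b j) *
              PiTensorProduct.singleAlgHom (R := ℚ) (A := fun _ : Fin (m+1+1) => A) (0 : Fin (m+1+1))
                (∏ j ∈ Finset.univ \ t, -(b j)) := by
        have e3 : ∀ j : Fin c,
            PiTensorProduct.singleAlgHom (R := ℚ) (A := fun _ : Fin (m+1+1) => A) (Fin.last (m+1)) (b j)
              - PiTensorProduct.singleAlgHom (R := ℚ) (A := fun _ : Fin (m+1+1) => A) (0 : Fin (m+1+1)) (b j)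
            = PiTensorProduct.singleAlgHom (R := ℚ) (A := fun _ : Fin (m+1+1) => A) (Fin.last (m+1)) (b j)
              + PiTensorProduct.singleAlgHom (R := ℚ) (A := fun _ : Fin (m+1+1) => A) (0 : Fin (m+1+1)) (-(b j)) := by
          intro j; rw [map_neg, sub_eq_add_neg]
        rw [Finset.prod_congr rfl fun j _ => e3 j, Finset.prod_add]
        exact Finset.sum_congr rfl fun t _ => by rw [map_prod, map_prod]
      rw [e2, Finset.mul_sum, map_sum,
        Finset.sum_eq_single_of_mem Finset.univ (Finset.mem_powerset_self _) ?_]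
      · rw [Finset.sdiff_self, Finset.prod_empty, ← mul_assoc, lastSplit_key,
          _root_.map_one, mul_one]
        have : h (∏ j, b j) = g (∏ j, b j) := by
          rw [hh, LinearMap.comp_apply, GradedAlgebra.proj_apply,
            DirectSum.decompose_of_mem_same 𝒜 hbprod]
        rw [this]
      · intro t ht hne
        rw [← mul_assoc, lastSplit_key]
        have hmem : (∏ j ∈ t, b j) ∈ 𝒜 (∑ j ∈ t, d j) :=
          SetLike.prod_mem_graded 𝒜 d b fun j _ => hbmem j
        have hlt : (∑ j ∈ t, d j) < D := by
          obtain ⟨j, hj⟩ : ∃ j, j ∉ t := by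
            by_contra hcon; push_neg at hcon
            exact hne (Finset.eq_univ_iff_forall.mpr hcon)
          exact Finset.sum_lt_sum_of_subset (Finset.subset_univ t) (Finset.mem_univ j) hj
            (Nat.pos_of_ne_zero (hdpos j)) fun _ _ _ => Nat.zero_le _
        have hzero : h (∏ j ∈ t, b j) = 0 := by
          rw [hh, LinearMap.comp_apply, GradedAlgebra.proj_apply,
            DirectSum.decompose_of_mem_ne 𝒜 hmem hlt.ne, map_zero]
        rw [hzero, mul_zero]
    intro hP0
    rw [hP0, map_zero] at hFP
    exact (mul_ne_zero hf hg) hFP.symm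
end

section
/- Let A be a graded-commutative ℚ-algebra, a₁,…,a_n ∈ A elements of positive degree with a₁⋯a_n ≠ 0, and in A^{⊗(r+1)} set ā_i = 1^{⊗r} ⊗ a_i − 1^{⊗(r−1)} ⊗ a_i ⊗ 1. Then each ā_i lies in the kernel K_{r+1} of the multiplication map μ_{r+1} : A^{⊗(r+1)} → A, and the product ā₁⋯ā_n lies in K_{r+1}^n and is nonzero. -/
open scoped TensorProduct

/-- `1 ⊗ ⋯ ⊗ x ⊗ ⋯ ⊗ 1` with `x` in the `i`-th tensor factor of `A^{⊗r}`. -/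
noncomputable def slot (A : Type*) [CommRing A] [Algebra ℚ A] (r : ℕ) (i : Fin r) (x : A) :
    ⨂[ℚ] _ : Fin r, A :=
  PiTensorProduct.singleAlgHom (R := ℚ) (A := fun _ : Fin r => A) i x

lemma mulAlgHom_slot (A : Type*) [CommRing A] [Algebra ℚ A] (r : ℕ) (i : Fin r) (x : A) :
    mulAlgHom A r (slot A r i x) = x := by
  simp only [mulAlgHom, slot, PiTensorProduct.singleAlgHom_apply]
  erw [PiTensorProduct.liftAlgHom_apply]
  simp [PiTensorProduct.lift.tprod, MultilinearMap.mkPiAlgebra_apply]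

section aux
variable (A : Type*) [CommRing A] [Algebra ℚ A] (𝒜 : ℕ → Submodule ℚ A) [GradedAlgebra 𝒜]

/-- The degree-zero projection as a `ℚ`-algebra homomorphism. -/
noncomputable def projZeroAlgHom : A →ₐ[ℚ] A :=
  AlgHom.mk' (GradedRing.projZeroRingHom 𝒜) (fun q x => by
    have : (GradedRing.projZeroRingHom 𝒜) (q • x) = GradedAlgebra.proj 𝒜 0 (q • x) := rfl
    rw [this, map_smul]
    rfl)

lemma projZeroAlgHom_apply (x : A) :
    projZeroAlgHom A 𝒜 x = GradedAlgebra.proj 𝒜 0 x := rfl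

/-- The auxiliary algebra hom `A^{⊗r} → A` applying `proj₀` in all slots except `j`. -/
noncomputable def psi (r : ℕ) (j : Fin r) : (⨂[ℚ] _ : Fin r, A) →ₐ[ℚ] A :=
  PiTensorProduct.liftAlgHom
    ((MultilinearMap.mkPiAlgebra ℚ (Fin r) A).compLinearMap
      (fun i => if i = j then LinearMap.id else (projZeroAlgHom A 𝒜).toLinearMap))
    (by
      simp only [MultilinearMap.compLinearMap_apply, MultilinearMap.mkPiAlgebra_apply]
      rw [show (1 : A) = ∏ i : Fin r, 1 by simp]
      refine Finset.prod_congr rfl fun i _ => ?_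
      split <;> simp)
    (by
      intro x y
      simp only [MultilinearMap.compLinearMap_apply, MultilinearMap.mkPiAlgebra_apply,
        ← Finset.prod_mul_distrib]
      refine Finset.prod_congr rfl fun i _ => ?_
      by_cases h : i = j
      · simp [h]
      · simp only [if_neg h, Pi.mul_apply, AlgHom.toLinearMap_apply]
        exact map_mul (projZeroAlgHom A 𝒜) _ _)

lemma psi_slot (r : ℕ) (j i : Fin r) (x : A) :
    psi A 𝒜 r j (slot A r i x) =
      if i = j then x else GradedAlgebra.proj 𝒜 0 x := by
  simp only [psi, slot, PiTensorProduct.singleAlgHom_apply,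
    PiTensorProduct.liftAlgHom_apply, PiTensorProduct.lift.tprod,
    MultilinearMap.compLinearMap_apply, MultilinearMap.mkPiAlgebra_apply]
  rw [Finset.prod_eq_single i]
  · by_cases h : i = j <;>
      simp [h, MonoidHom.mulSingle_apply, projZeroAlgHom_apply]
  · intro b _ hb
    rw [MonoidHom.mulSingle_apply, Pi.mulSingle_eq_of_ne hb]
    by_cases h : b = j <;> simp [h]
  · intro h; exact absurd (Finset.mem_univ i) h

end aux

/-- For a (graded-)commutative graded `ℚ`-algebra `A` and positive-degree elements
`a₁, …, a_n` with `a₁ ⋯ a_n ≠ 0`, the elements `ā_i = 1^{⊗r} ⊗ a_i − 1^{⊗(r-1)} ⊗ a_i ⊗ 1`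
of `A^{⊗(r+1)}` lie in the kernel `K_{r+1}` of `μ_{r+1}`, and their product lies in
`K_{r+1}^n` and is nonzero. -/
theorem stmt_11 (A : Type*) [CommRing A] [Algebra ℚ A]
    (𝒜 : ℕ → Submodule ℚ A) [GradedAlgebra 𝒜] (r : ℕ) (hr : 2 ≤ r) (n : ℕ)
    (a : Fin n → A)
    (hpos : ∀ i, GradedAlgebra.proj 𝒜 0 (a i) = 0)
    (hne : (∏ i, a i) ≠ 0)
    (abar : Fin n → ⨂[ℚ] _ : Fin (r + 1), A)
    (habar : ∀ i, abar i =
      slot A (r + 1) (Fin.last r) (a i) - slot A (r + 1) ⟨r - 1, by omega⟩ (a i)) :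
    (∀ i, mulAlgHom A (r + 1) (abar i) = 0) ∧
    (∏ i, abar i) ∈
      (LinearMap.ker (mulAlgHom A (r + 1)).toLinearMap :
        Submodule ℚ (⨂[ℚ] _ : Fin (r + 1), A)) ^ n ∧
    (∏ i, abar i) ≠ 0 := by
  have hker : ∀ i, mulAlgHom A (r + 1) (abar i) = 0 := by
    intro i
    rw [habar i, map_sub, mulAlgHom_slot, mulAlgHom_slot, sub_self]
  refine ⟨hker, ?_, ?_⟩
  · -- membership in K^n
    set K : Submodule ℚ (⨂[ℚ] _ : Fin (r + 1), A) :=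
      LinearMap.ker (mulAlgHom A (r + 1)).toLinearMap with hK
    have hmem : ∀ i, abar i ∈ K := fun i => by
      simp only [hK, LinearMap.mem_ker, AlgHom.toLinearMap_apply]; exact hker i
    have : ∀ (s : Finset (Fin n)), (∏ i ∈ s, abar i) ∈ K ^ s.card := by
      intro s
      induction s using Finset.cons_induction with
      | empty =>
        rw [Finset.prod_empty, Finset.card_empty, pow_zero]
        exact Submodule.one_le.mp le_rfl
      | cons j s hj ih =>
        rw [Finset.prod_cons, Finset.card_cons, pow_succ, mul_comm (K ^ s.card) K]
        exact Submodule.mul_mem_mul (hmem j) ih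
    simpa using this Finset.univ
  · -- nonvanishing
    intro h0
    have key : psi A 𝒜 (r + 1) (Fin.last r) (∏ i, abar i) = ∏ i, a i := by
      rw [map_prod]
      refine Finset.prod_congr rfl fun i _ => ?_
      rw [habar i, map_sub, psi_slot, psi_slot, if_pos rfl, if_neg, hpos i, sub_zero]
      intro h
      have := congrArg Fin.val h
      simp [Fin.last] at this
      omega
    rw [h0, map_zero] at key
    exact hne key.symm
end
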